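/- Let f : [a,b] → ℝ be continuous and suppose that limsup_{ε→0⁺} sup_{λ∈(a,b)} (f(λ+ε) + f(λ-ε) - 2f(λ))/ε² ≤ 0 (where the supremum is over those λ for which λ±ε ∈ [a,b]). Then f is concave on [a,b]. -/

import Mathlib

open Set

/-- Auxiliary: chord inequality for a function with strictly negative small
symmetric second differences. -/
lemma chord_le_aux (a b : ℝ) (g : ℝ → ℝ)
    (hcont : ContinuousOn g (Icc a b)) (ε₀ : ℝ) (hε₀ : 0 < ε₀)
    (h : ∀ ε : ℝ, 0 < ε → ε < ε₀ → ∀ lam : ℝ, lam ∈ Ioo a b → a ≤ lam - ε → lam + ε ≤ b →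
        g (lam + ε) + g (lam - ε) - 2 * g lam < 0)
    (x y : ℝ) (hx : x ∈ Icc a b) (hy : y ∈ Icc a b) (hxy : x < y)
    (z : ℝ) (hz : z ∈ Icc x y) :
    g x + (g y - g x) / (y - x) * (z - x) ≤ g z := by
  by_contra hlt
  push_neg at hlt
  set L : ℝ → ℝ := fun w => g x + (g y - g x) / (y - x) * (w - x) with hL
  set φ : ℝ → ℝ := fun w => g w - L w with hφ
  have hsub : Icc x y ⊆ Icc a b := Icc_subset_Icc hx.1 hy.2
  have hφc : ContinuousOn φ (Icc x y) := by
    apply (hcont.mono hsub).sub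
    fun_prop
  obtain ⟨l0, hl0mem, hl0min⟩ := isCompact_Icc.exists_isMinOn (nonempty_Icc.2 hxy.le) hφc
  have hyx : y - x ≠ 0 := by linarith
  have hφx : φ x = 0 := by simp [hφ, hL]
  have hφy : φ y = 0 := by simp only [hφ, hL]; field_simp; ring
  have hφz : φ z < 0 := by simp only [hφ, hL]; linarith
  have hmin : φ l0 < 0 := lt_of_le_of_lt (hl0min hz) hφz
  have hl0x : x < l0 := by
    rcases lt_or_eq_of_le hl0mem.1 with h' | h'
    · exact h'
    · exfalso; rw [← h', hφx] at hmin; linarith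
  have hl0y : l0 < y := by
    rcases lt_or_eq_of_le hl0mem.2 with h' | h'
    · exact h'
    · exfalso; rw [h', hφy] at hmin; linarith
  set ε : ℝ := min (ε₀ / 2) (min (l0 - x) (y - l0)) with hε
  have hεpos : 0 < ε := by
    apply lt_min (by linarith)
    exact lt_min (by linarith) (by linarith)
  have hεlt : ε < ε₀ := lt_of_le_of_lt (min_le_left _ _) (by linarith)
  have hε1 : ε ≤ l0 - x := le_trans (min_le_right _ _) (min_le_left _ _)
  have hε2 : ε ≤ y - l0 := le_trans (min_le_right _ _) (min_le_right _ _)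
  have hmem1 : l0 + ε ∈ Icc x y := ⟨by linarith, by linarith⟩
  have hmem2 : l0 - ε ∈ Icc x y := ⟨by linarith, by linarith⟩
  have hbad := h ε hεpos hεlt l0 ⟨lt_of_le_of_lt hx.1 hl0x, lt_of_lt_of_le hl0y hy.2⟩
    (by have := hx.1; linarith) (by have := hy.2; linarith)
  have h1 : φ l0 ≤ φ (l0 + ε) := hl0min hmem1
  have h2 : φ l0 ≤ φ (l0 - ε) := hl0min hmem2
  have hLsum : L (l0 + ε) + L (l0 - ε) - 2 * L l0 = 0 := by simp only [hL]; ring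
  simp only [hφ] at h1 h2
  linarith

lemma concaveOn_of_neg_second_diff (a b : ℝ) (g : ℝ → ℝ)
    (hcont : ContinuousOn g (Icc a b)) (ε₀ : ℝ) (hε₀ : 0 < ε₀)
    (h : ∀ ε : ℝ, 0 < ε → ε < ε₀ → ∀ lam : ℝ, lam ∈ Ioo a b → a ≤ lam - ε → lam + ε ≤ b →
        g (lam + ε) + g (lam - ε) - 2 * g lam < 0) :
    ConcaveOn ℝ (Icc a b) g := by
  have step : ∀ x ∈ Icc a b, ∀ y ∈ Icc a b, x < y → ∀ s t : ℝ, 0 ≤ s → 0 ≤ t → s + t = 1 →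
      s * g x + t * g y ≤ g (s * x + t * y) := by
    intro x hx y hy hxy s t hs ht hst
    have hzmem : s * x + t * y ∈ Icc x y := by
      have e1 : s * x + t * y - x = t * (y - x) := by linear_combination x * hst
      have e2 : y - (s * x + t * y) = s * (y - x) := by linear_combination (-y) * hst
      constructor
      · nlinarith [mul_nonneg ht (sub_nonneg.2 hxy.le)]
      · nlinarith [mul_nonneg hs (sub_nonneg.2 hxy.le)]
    have key := chord_le_aux a b g hcont ε₀ hε₀ h x y hx hy hxy _ hzmem
    have hyx : y - x ≠ 0 := by linarith
    have h2 : (g y - g x) / (y - x) * (s * x + t * y - x) = (g y - g x) * t := by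
      have hs1 : s = 1 - t := by linarith
      field_simp [hs1]
      rw [hs1]; ring
    rw [h2] at key
    have e1 : s * g x + t * g y = g x + (g y - g x) * t := by
      have hs1 : s = 1 - t := by linarith
      rw [hs1]; ring
    linarith
  refine ⟨convex_Icc a b, fun x hx y hy s t hs ht hst => ?_⟩
  simp only [smul_eq_mul]
  rcases lt_trichotomy x y with hxy | rfl | hxy
  · exact step x hx y hy hxy s t hs ht hst
  · have e : s * x + t * x = x := by rw [← add_mul, hst, one_mul]
    rw [e, ← add_mul, hst, one_mul]
  · have := step y hy x hx hxy t s ht hs (by linarith)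
    calc s * g x + t * g y = t * g y + s * g x := by ring
    _ ≤ g (t * y + s * x) := this
    _ = g (s * x + t * y) := by ring_nf

theorem concave_of_symmetric_second_difference
    (a b : ℝ) (hab : a < b) (f : ℝ → ℝ)
    (hcont : ContinuousOn f (Icc a b))
    (hlimsup : ∀ c : ℝ, 0 < c → ∃ ε₀ : ℝ, 0 < ε₀ ∧
      ∀ ε : ℝ, 0 < ε → ε < ε₀ →
        ∀ lam : ℝ, lam ∈ Ioo a b → a ≤ lam - ε → lam + ε ≤ b →
          (f (lam + ε) + f (lam - ε) - 2 * f lam) / ε ^ 2 ≤ c) :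
    ConcaveOn ℝ (Icc a b) f := by
  refine ⟨convex_Icc a b, fun x hx y hy s t hs ht hst => ?_⟩
  simp only [smul_eq_mul]
  set z := s * x + t * y with hz
  set C := s * x ^ 2 + t * y ^ 2 - z ^ 2 with hC
  have hCnn : 0 ≤ C := by
    rw [hC, hz]
    nlinarith [sq_nonneg (x - y), mul_nonneg hs ht]
  apply le_of_forall_pos_le_add
  intro ε hε
  set η : ℝ := ε / (C + 1) with hη
  have hηpos : 0 < η := div_pos hε (by linarith)
  obtain ⟨ε₀, hε₀, hq⟩ := hlimsup η hηpos
  have hgcon : ConcaveOn ℝ (Icc a b) (fun w => f w - η * w ^ 2) := by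
    apply concaveOn_of_neg_second_diff a b _ (hcont.sub (by fun_prop)) ε₀ hε₀
    intro ε' hε'0 hε'lt lam hlam h1 h2
    have hq' := hq ε' hε'0 hε'lt lam hlam h1 h2
    have hε'2 : (0:ℝ) < ε' ^ 2 := by positivity
    rw [div_le_iff₀ hε'2] at hq'
    have : η * ((lam + ε') ^ 2 + (lam - ε') ^ 2 - 2 * lam ^ 2) = 2 * η * ε' ^ 2 := by ring
    simp only [Pi.sub_apply]
    nlinarith [mul_pos hηpos hε'2]
  have hkey := hgcon.2 hx hy hs ht hst
  simp only [smul_eq_mul] at hkey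
  have e1 : s * (f x - η * x ^ 2) + t * (f y - η * y ^ 2)
      = s * f x + t * f y - η * (s * x ^ 2 + t * y ^ 2) := by ring
  rw [e1, ← hz] at hkey
  have e2 : η * z ^ 2 = η * (s * x ^ 2 + t * y ^ 2) - η * C := by rw [hC]; ring
  have hηC : η * C ≤ ε := by
    rw [hη, div_mul_eq_mul_div, div_le_iff₀ (by linarith : (0:ℝ) < C + 1)]
    nlinarith
  linarith [hkey, e2]
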